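/- Let C ⊆ L⁰₊ be convex, let g ∈ C be strictly positive on C, and define C̃_g := { 1_{g=0} + 1_{g>0}·(f/g) : f ∈ C }. Then cs_1(C̃_g) = { 1_{g=0} + 1_{g>0}·(h/g) : h ∈ cs_g(C) }; in particular, cs_g(C) is bounded in probability if and only if cs_1(C̃_g) is bounded in probability. -/

import Mathlib

open MeasureTheory Filter Set Topology
open scoped ENNReal

noncomputable section

variable {Ω : Type*} [MeasurableSpace Ω]

/-- The nonnegative orthant `L⁰₊` of `L⁰`: (a.e. classes of) random variables that are
a.e. nonnegative.  We work with representatives, requiring a.e.-measurability. -/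
def L0plus (P : Measure Ω) : Set (Ω → ℝ) :=
  {f | AEMeasurable f P ∧ 0 ≤ᵐ[P] f}

/-- A set `A ⊆ L⁰₊` is bounded (in probability) if `lim_{ℓ→∞} sup_{f∈A} P[f>ℓ] = 0`. -/
def BoundedInProb (P : Measure Ω) (A : Set (Ω → ℝ)) : Prop :=
  Tendsto (fun ℓ : ℝ => ⨆ f ∈ A, P {ω | ℓ < f ω}) atTop (nhds 0)

/-- A set `K` is closed in probability: it contains every (a.e.-measurable) limit in
measure of sequences from `K`.  (Convergence in probability is metrizable, so sequential
closedness is closedness.) -/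
def ClosedInProb (P : Measure Ω) (K : Set (Ω → ℝ)) : Prop :=
  ∀ (f : ℕ → Ω → ℝ) (g : Ω → ℝ), (∀ n, f n ∈ K) → AEMeasurable g P →
    TendstoInMeasure P f atTop g → g ∈ K

/-- `g` is strictly positive on `C`: `P[f > 0, g = 0] = 0` for every `f ∈ C`. -/
def StrictlyPositiveOn (P : Measure Ω) (C : Set (Ω → ℝ)) (g : Ω → ℝ) : Prop :=
  ∀ f ∈ C, P ({ω | 0 < f ω} ∩ {ω | g ω = 0}) = 0

/-- `Q` is a probability measure equivalent to `P`. -/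
def EquivProb (P Q : Measure Ω) : Prop :=
  IsProbabilityMeasure Q ∧ Q ≪ P ∧ P ≪ Q

/-- `g` is a numéraire of `C`: it is strictly positive on `C` and there is an equivalent
probability `Q` with `E_Q[(f/g)·1_{g>0}] ≤ Q[g>0]` for all `f ∈ C`. -/
def IsNumeraire (P : Measure Ω) (C : Set (Ω → ℝ)) (g : Ω → ℝ) : Prop :=
  StrictlyPositiveOn P C g ∧
    ∃ Q : Measure Ω, EquivProb P Q ∧
      ∀ f ∈ C, (∫⁻ ω in {ω | 0 < g ω}, ENNReal.ofReal (f ω / g ω) ∂Q) ≤ Q {ω | 0 < g ω}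

/-- The class `CS_g(C)` of subsets `K` of `L⁰₊` with (CS1) `C ⊆ K`, (CS2) `K` convex and
closed in probability, (CS3) `f ∈ K`, `δ ≥ 0`, `(1+δ)f − δg ∈ L⁰₊` imply `(1+δ)f − δg ∈ K`. -/
def CSclass (P : Measure Ω) (C : Set (Ω → ℝ)) (g : Ω → ℝ) : Set (Set (Ω → ℝ)) :=
  {K | K ⊆ L0plus P ∧ C ⊆ K ∧ Convex ℝ K ∧ ClosedInProb P K ∧
    ∀ f ∈ K, ∀ δ : ℝ, 0 ≤ δ →
      (fun ω => (1 + δ) * f ω - δ * g ω) ∈ L0plus P →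
      (fun ω => (1 + δ) * f ω - δ * g ω) ∈ K}

/-- `cs_g(C)`, the smallest element of `CS_g(C)`. -/
def csSet (P : Measure Ω) (C : Set (Ω → ℝ)) (g : Ω → ℝ) : Set (Ω → ℝ) :=
  ⋂ K ∈ CSclass P C g, K

/-- The solid hull of `K` in `L⁰₊`. -/
def SolidHull (P : Measure Ω) (K : Set (Ω → ℝ)) : Set (Ω → ℝ) :=
  {f | f ∈ L0plus P ∧ ∃ h ∈ K, f ≤ᵐ[P] h}

/-- `L∞`: essentially bounded (a.e.-measurable) random variables. -/
def Linf (P : Measure Ω) : Set (Ω → ℝ) :=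
  {f | AEMeasurable f P ∧ ∃ c : ℝ, ∀ᵐ ω ∂P, |f ω| ≤ c}

/-- `L∞₊ = L⁰₊ ∩ L∞`. -/
def LinfPlus (P : Measure Ω) : Set (Ω → ℝ) := L0plus P ∩ Linf P

/-- `L` is solid: `0 ≤ u ≤ h` a.s. with `h ∈ L` implies `u ∈ L`. -/
def IsSolid (P : Measure Ω) (L : Set (Ω → ℝ)) : Prop :=
  ∀ u : Ω → ℝ, AEMeasurable u P → 0 ≤ᵐ[P] u → (∃ h ∈ L, u ≤ᵐ[P] h) → u ∈ L

/-- `A_α := α (L − 1) = { α(f − 1) : f ∈ L }`. -/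
def Aset (L : Set (Ω → ℝ)) (α : ℝ) : Set (Ω → ℝ) :=
  (fun f : Ω → ℝ => fun ω => α * (f ω - 1)) '' L

/-- `J := ⋃_{α ≥ 0} A_α`. -/
def Jset (L : Set (Ω → ℝ)) : Set (Ω → ℝ) := ⋃ α ∈ Ici (0 : ℝ), Aset L α

/-- The weak* topology on (representatives of) `L∞`, viewed as the dual of `L¹(P)`:
the topology induced by the maps `φ ↦ ∫ φ·u dP` for integrable `u`. -/
def weakStarTop (P : Measure Ω) : TopologicalSpace (Ω → ℝ) :=
  ⨅ (u : Ω → ℝ) (_ : Integrable u P),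
    TopologicalSpace.induced (fun φ : Ω → ℝ => ∫ ω, φ ω * u ω ∂P) inferInstance

/-- The witness set `K := { h ∈ L⁰₊ : P[h>0, g=0]=0 and E_Q[(h/g)·1_{g>0}] ≤ Q[g>0] }`. -/
def Kwitness (P Q : Measure Ω) (g : Ω → ℝ) : Set (Ω → ℝ) :=
  {h | h ∈ L0plus P ∧ P ({ω | 0 < h ω} ∩ {ω | g ω = 0}) = 0 ∧
    (∫⁻ ω in {ω | 0 < g ω}, ENNReal.ofReal (h ω / g ω) ∂Q) ≤ Q {ω | 0 < g ω}}

/-- The set `C` of the example: outcomes `1 − θ₁ + (θ₁ + θ₂)ξ` for `θ` in the constraint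
set `Θ = { θ ∈ ℝ₊² : θ₂ ≤ √θ₁ ≤ 1 }`. -/
def exampleC (ξ : Ω → ℝ) : Set (Ω → ℝ) :=
  {f | ∃ θ : ℝ × ℝ, (0 ≤ θ.1 ∧ 0 ≤ θ.2 ∧ θ.2 ≤ Real.sqrt θ.1 ∧ Real.sqrt θ.1 ≤ 1) ∧
    f = fun ω => 1 - θ.1 + (θ.1 + θ.2) * ξ ω}

namespace CsAux

variable {P : Measure Ω}

/-- The transform `h ↦ 1_{g=0} + 1_{g>0} (h/g)`. -/
def T (g h : Ω → ℝ) : Ω → ℝ := fun ω => if g ω = 0 then 1 else h ω / g ω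

lemma aemeasurable_T {g h : Ω → ℝ} (hg : AEMeasurable g P) (hh : AEMeasurable h P) :
    AEMeasurable (T g h) P := by
  obtain ⟨g0, hg0m, hg0⟩ := hg
  obtain ⟨h0, hh0m, hh0⟩ := hh
  refine ⟨fun ω => if g0 ω = 0 then 1 else h0 ω / g0 ω,
    Measurable.ite (hg0m (measurableSet_singleton 0)) measurable_const (hh0m.div hg0m), ?_⟩
  filter_upwards [hg0, hh0] with ω e1 e2
  simp only [T, e1, e2]

lemma exists_gt_bound [IsFiniteMeasure P] {w : Ω → ℝ} (hw : AEMeasurable w P)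
    {η : ℝ≥0∞} (hη : 0 < η) : ∃ M : ℝ, 0 < M ∧ P {ω | M < |w ω|} ≤ η := by
  obtain ⟨w0, hw0m, hw0⟩ := hw
  have h1 : Tendsto (fun n : ℕ => P {ω | (n : ℝ) < |w0 ω|}) atTop
      (𝓝 (P (⋂ n : ℕ, {ω | (n : ℝ) < |w0 ω|}))) := by
    refine tendsto_measure_iInter_atTop (fun n => ?_) (fun i j hij ω hω => ?_) ⟨0, measure_ne_top _ _⟩
    · exact (measurableSet_lt measurable_const hw0m.abs).nullMeasurableSet
    · exact lt_of_le_of_lt (show (i:ℝ) ≤ (j:ℝ) by exact_mod_cast hij) hω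
  have h2 : (⋂ n : ℕ, {ω | (n : ℝ) < |w0 ω|}) = ∅ := by
    ext ω
    simp only [mem_iInter, mem_setOf_eq, mem_empty_iff_false, iff_false, not_forall, not_lt]
    obtain ⟨n, hn⟩ := exists_nat_gt (|w0 ω|)
    exact ⟨n, hn.le⟩
  rw [h2, measure_empty] at h1
  obtain ⟨n, hn⟩ := (h1.eventually_lt_const hη).exists
  refine ⟨(n : ℝ) + 1, by positivity, ?_⟩
  have hnull : P {ω | ¬ w ω = w0 ω} = 0 := ae_iff.1 hw0
  calc P {ω | (n : ℝ) + 1 < |w ω|}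
      ≤ P ({ω | (n : ℝ) < |w0 ω|} ∪ {ω | ¬ w ω = w0 ω}) := by
        refine measure_mono fun ω hω => ?_
        by_cases he : w ω = w0 ω
        · left; simp only [mem_setOf_eq] at hω ⊢; rw [← he]; linarith
        · exact Or.inr he
    _ ≤ P {ω | (n : ℝ) < |w0 ω|} + P {ω | ¬ w ω = w0 ω} := measure_union_le _ _
    _ ≤ η := by rw [hnull, add_zero]; exact hn.le

lemma exists_small_bound [IsFiniteMeasure P] {g : Ω → ℝ} (hg : AEMeasurable g P)
    {η : ℝ≥0∞} (hη : 0 < η) : ∃ δ : ℝ, 0 < δ ∧ P {ω | 0 < g ω ∧ g ω < δ} ≤ η := by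
  obtain ⟨g0, hg0m, hg0⟩ := hg
  have h1 : Tendsto (fun n : ℕ => P {ω | 0 < g0 ω ∧ g0 ω < 1 / ((n : ℝ) + 1)}) atTop
      (𝓝 (P (⋂ n : ℕ, {ω | 0 < g0 ω ∧ g0 ω < 1 / ((n : ℝ) + 1)}))) := by
    refine tendsto_measure_iInter_atTop (fun n => ?_) (fun i j hij ω hω => ?_) ⟨0, measure_ne_top _ _⟩
    · exact ((measurableSet_lt measurable_const hg0m).inter
        (measurableSet_lt hg0m measurable_const)).nullMeasurableSet
    · refine ⟨hω.1, lt_of_lt_of_le hω.2 ?_⟩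
      apply one_div_le_one_div_of_le (by positivity)
      have : (i : ℝ) ≤ j := by exact_mod_cast hij
      linarith
  have h2 : (⋂ n : ℕ, {ω | 0 < g0 ω ∧ g0 ω < 1 / ((n : ℝ) + 1)}) = ∅ := by
    ext ω
    simp only [mem_iInter, mem_setOf_eq, mem_empty_iff_false, iff_false, not_forall]
    by_cases hp : 0 < g0 ω
    · obtain ⟨n, hn⟩ := exists_nat_one_div_lt hp
      exact ⟨n, fun hc => absurd hc.2 (not_lt.2 (by exact_mod_cast hn.le))⟩
    · exact ⟨0, fun hc => hp hc.1⟩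
  rw [h2, measure_empty] at h1
  obtain ⟨n, hn⟩ := (h1.eventually_lt_const hη).exists
  refine ⟨1 / ((n : ℝ) + 1), by positivity, ?_⟩
  have hnull : P {ω | ¬ g ω = g0 ω} = 0 := ae_iff.1 hg0
  calc P {ω | 0 < g ω ∧ g ω < 1 / ((n : ℝ) + 1)}
      ≤ P ({ω | 0 < g0 ω ∧ g0 ω < 1 / ((n : ℝ) + 1)} ∪ {ω | ¬ g ω = g0 ω}) := by
        refine measure_mono fun ω hω => ?_
        by_cases he : g ω = g0 ω
        · exact Or.inl (by simp only [mem_setOf_eq] at hω ⊢; rw [← he]; exact hω)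
        · exact Or.inr he
    _ ≤ _ + _ := measure_union_le _ _
    _ ≤ η := by rw [hnull, add_zero]; exact hn.le

lemma tendstoInMeasure_mul_right [IsFiniteMeasure P] {f : ℕ → Ω → ℝ} {F w : Ω → ℝ}
    (hw : AEMeasurable w P) (hf : TendstoInMeasure P f atTop F) :
    TendstoInMeasure P (fun n ω => f n ω * w ω) atTop (fun ω => F ω * w ω) := by
  rw [tendstoInMeasure_iff_dist] at hf ⊢
  intro ε hε
  rw [ENNReal.tendsto_nhds_zero]
  intro η hη
  obtain ⟨M, hM, hMη⟩ := exists_gt_bound hw (ENNReal.half_pos hη.ne')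
  have h2 := hf (ε / M) (div_pos hε hM)
  have h3 : ∀ᶠ n in atTop, P {ω | ε / M ≤ dist (f n ω) (F ω)} ≤ η / 2 :=
    (h2.eventually_lt_const (ENNReal.half_pos hη.ne')).mono fun n hn => hn.le
  filter_upwards [h3] with n hn
  have hsub : {ω | ε ≤ dist (f n ω * w ω) (F ω * w ω)} ⊆
      {ω | ε / M ≤ dist (f n ω) (F ω)} ∪ {ω | M < |w ω|} := by
    intro ω hω
    by_cases hwM : M < |w ω|
    · exact Or.inr hwM
    · left
      push_neg at hwM
      simp only [mem_setOf_eq, Real.dist_eq] at hω ⊢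
      have h4 : |f n ω * w ω - F ω * w ω| = |f n ω - F ω| * |w ω| := by
        rw [← abs_mul]; ring_nf
      rw [h4] at hω
      rw [div_le_iff₀ hM]
      calc ε ≤ |f n ω - F ω| * |w ω| := hω
        _ ≤ |f n ω - F ω| * M := mul_le_mul_of_nonneg_left hwM (abs_nonneg _)
  calc P {ω | ε ≤ dist (f n ω * w ω) (F ω * w ω)}
      ≤ P ({ω | ε / M ≤ dist (f n ω) (F ω)} ∪ {ω | M < |w ω|}) := measure_mono hsub
    _ ≤ P {ω | ε / M ≤ dist (f n ω) (F ω)} + P {ω | M < |w ω|} := measure_union_le _ _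
    _ ≤ η / 2 + η / 2 := add_le_add hn hMη
    _ = η := ENNReal.add_halves η

lemma l0plus_convex (P : Measure Ω) : Convex ℝ (L0plus P) := by
  intro f hf f' hf' a b ha hb _
  refine ⟨(hf.1.const_smul a).add (hf'.1.const_smul b), ?_⟩
  filter_upwards [hf.2, hf'.2] with ω h1 h2
  simp only [Pi.zero_apply] at h1 h2
  have : 0 ≤ a * f ω + b * f' ω := add_nonneg (mul_nonneg ha h1) (mul_nonneg hb h2)
  simpa [Pi.add_apply, Pi.smul_apply, smul_eq_mul] using this

lemma l0plus_closed (P : Measure Ω) : ClosedInProb P (L0plus P) := by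
  intro f F hf hF htim
  refine ⟨hF, ?_⟩
  obtain ⟨ns, _, hae⟩ := htim.exists_seq_tendsto_ae
  have hnn : ∀ᵐ ω ∂P, ∀ n, 0 ≤ f n ω := ae_all_iff.2 fun n => (hf n).2
  filter_upwards [hae, hnn] with ω h1 h2
  simp only [Pi.zero_apply]
  exact ge_of_tendsto' h1 fun i => h2 (ns i)

lemma mem_of_ae_eq {K : Set (Ω → ℝ)} (hcl : ClosedInProb P K) {u v : Ω → ℝ} (hv : v ∈ K)
    (hu : AEMeasurable u P) (h : v =ᵐ[P] u) : u ∈ K := by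
  refine hcl (fun _ => v) u (fun _ => hv) hu (tendstoInMeasure_iff_dist.2 fun ε hε => ?_)
  have h0 : P {ω | ε ≤ dist (v ω) (u ω)} = 0 := by
    refine measure_mono_null (fun ω hω => ?_) (ae_iff.1 h)
    simp only [mem_setOf_eq] at hω ⊢
    intro heq
    rw [heq, dist_self] at hω
    linarith
  simpa [h0] using (tendsto_const_nhds : Tendsto (fun _ : ℕ => (0:ℝ≥0∞)) atTop (𝓝 0))

variable {C : Set (Ω → ℝ)} {g : Ω → ℝ}

lemma l0plus_mem_CSclass (hC : C ⊆ L0plus P) : L0plus P ∈ CSclass P C g :=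
  ⟨subset_rfl, hC, l0plus_convex P, l0plus_closed P, fun _ _ _ _ h => h⟩

lemma subset_csSet : C ⊆ csSet P C g := fun f hf =>
  Set.mem_iInter₂.2 fun _ hK => hK.2.1 hf

lemma csSet_subset {K : Set (Ω → ℝ)} (hK : K ∈ CSclass P C g) : csSet P C g ⊆ K :=
  fun _ hf => Set.mem_iInter₂.1 hf K hK

lemma csSet_mem_CSclass (hC : C ⊆ L0plus P) : csSet P C g ∈ CSclass P C g := by
  refine ⟨csSet_subset (l0plus_mem_CSclass hC), subset_csSet, ?_, ?_, ?_⟩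
  · intro x hx y hy a b ha hb hab
    exact Set.mem_iInter₂.2 fun K hK =>
      hK.2.2.1 (Set.mem_iInter₂.1 hx K hK) (Set.mem_iInter₂.1 hy K hK) ha hb hab
  · intro f F hf hF htim
    exact Set.mem_iInter₂.2 fun K hK =>
      hK.2.2.2.1 f F (fun n => Set.mem_iInter₂.1 (hf n) K hK) hF htim
  · intro f hf δ hδ hmem
    exact Set.mem_iInter₂.2 fun K hK =>
      hK.2.2.2.2 f (Set.mem_iInter₂.1 hf K hK) δ hδ hmem

lemma T_combo (g h h' : Ω → ℝ) {a b : ℝ} (hab : a + b = 1) :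
    T g (a • h + b • h') = a • T g h + b • T g h' := by
  funext ω
  simp only [T, Pi.add_apply, Pi.smul_apply, smul_eq_mul]
  by_cases hgw : g ω = 0
  · simp only [hgw, ite_true, mul_one]
    exact hab.symm
  · simp only [hgw, if_false, ite_false]
    rw [add_div, mul_div_assoc, mul_div_assoc]

lemma T_cs3 (g h : Ω → ℝ) (δ : ℝ) :
    T g (fun ω => (1 + δ) * h ω - δ * g ω) = fun ω => (1 + δ) * T g h ω - δ * 1 := by
  funext ω
  simp only [T]
  by_cases hgw : g ω = 0
  · simp only [hgw, if_true, ite_true, mul_zero]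
    ring
  · simp only [hgw, if_false, ite_false]
    field_simp

lemma T_mem_l0plus (hgL : g ∈ L0plus P) {h : Ω → ℝ} (hh : h ∈ L0plus P) :
    T g h ∈ L0plus P := by
  refine ⟨aemeasurable_T hgL.1 hh.1, ?_⟩
  filter_upwards [hgL.2, hh.2] with ω h1 h2
  simp only [Pi.zero_apply] at h1 h2 ⊢
  simp only [T]
  by_cases hgw : g ω = 0
  · simp [hgw]
  · simp only [hgw, ite_false]
    exact div_nonneg h2 h1

lemma null_combo {x y : Ω → ℝ} (hx : P ({ω | 0 < x ω} ∩ {ω | g ω = 0}) = 0)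
    (hy : P ({ω | 0 < y ω} ∩ {ω | g ω = 0}) = 0) {a b : ℝ} (ha : 0 ≤ a) (hb : 0 ≤ b) :
    P ({ω | 0 < (a • x + b • y) ω} ∩ {ω | g ω = 0}) = 0 := by
  refine measure_mono_null (fun ω hω => ?_) (measure_union_null hx hy)
  obtain ⟨hpos, hg0⟩ := hω
  simp only [Pi.add_apply, Pi.smul_apply, smul_eq_mul, mem_setOf_eq] at hpos
  by_cases hxω : 0 < x ω
  · exact Or.inl ⟨hxω, hg0⟩
  · right
    simp only [mem_inter_iff, mem_setOf_eq]
    refine ⟨?_, hg0⟩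
    by_contra hyω
    push_neg at hxω hyω
    nlinarith [mul_nonneg ha (neg_nonneg.2 hxω), mul_nonneg hb (neg_nonneg.2 hyω)]

lemma null_cs3 {f : Ω → ℝ} (hf : P ({ω | 0 < f ω} ∩ {ω | g ω = 0}) = 0) {δ : ℝ} (hδ : 0 ≤ δ) :
    P ({ω | 0 < (1 + δ) * f ω - δ * g ω} ∩ {ω | g ω = 0}) = 0 := by
  refine measure_mono_null (fun ω hω => ?_) hf
  obtain ⟨hpos, hg0⟩ := hω
  simp only [mem_setOf_eq] at hpos hg0 ⊢
  rw [hg0, mul_zero, sub_zero] at hpos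
  refine ⟨?_, hg0⟩
  simp only [mem_setOf_eq]
  by_contra hx
  push_neg at hx
  nlinarith

lemma null_limit {f : ℕ → Ω → ℝ} {F : Ω → ℝ}
    (hnull : ∀ n, P ({ω | 0 < f n ω} ∩ {ω | g ω = 0}) = 0)
    (htim : TendstoInMeasure P f atTop F) :
    P ({ω | 0 < F ω} ∩ {ω | g ω = 0}) = 0 := by
  obtain ⟨ns, _, hae⟩ := htim.exists_seq_tendsto_ae
  have h1 : ∀ᵐ ω ∂P, ∀ n, ω ∉ ({ω | 0 < f n ω} ∩ {ω | g ω = 0}) :=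
    ae_all_iff.2 fun n => measure_eq_zero_iff_ae_notMem.1 (hnull n)
  rw [measure_eq_zero_iff_ae_notMem]
  filter_upwards [hae, h1] with ω hωae hωn
  rintro ⟨hF, hg0⟩
  have h2 : ∀ k, f (ns k) ω ≤ 0 := by
    intro k
    by_contra hc
    push_neg at hc
    exact hωn (ns k) ⟨hc, hg0⟩
  have h3 : F ω ≤ 0 := le_of_tendsto' hωae h2
  exact absurd hF (not_lt.2 h3)

lemma csSet_sp (hC : C ⊆ L0plus P) (hsp : StrictlyPositiveOn P C g) :
    csSet P C g ⊆ {h | h ∈ L0plus P ∧ P ({ω | 0 < h ω} ∩ {ω | g ω = 0}) = 0} := by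
  refine csSet_subset ⟨fun h hh => hh.1, fun f hf => ⟨hC hf, hsp f hf⟩, ?_, ?_, ?_⟩
  · intro x hx y hy a b ha hb hab
    exact ⟨l0plus_convex P hx.1 hy.1 ha hb hab, null_combo hx.2 hy.2 ha hb⟩
  · intro f F hf hF htim
    exact ⟨l0plus_closed P f F (fun n => (hf n).1) hF htim,
      null_limit (fun n => (hf n).2) htim⟩
  · intro f hf δ hδ hmem
    exact ⟨hmem, null_cs3 hf.2 hδ⟩

lemma csSet_zero_on (hC : C ⊆ L0plus P) (hsp : StrictlyPositiveOn P C g)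
    {h : Ω → ℝ} (hh : h ∈ csSet P C g) : ∀ᵐ ω ∂P, g ω = 0 → h ω = 0 := by
  obtain ⟨hL, hnull⟩ := csSet_sp hC hsp hh
  have h1 : ∀ᵐ ω ∂P, ω ∉ ({ω | 0 < h ω} ∩ {ω | g ω = 0}) := measure_eq_zero_iff_ae_notMem.1 hnull
  filter_upwards [h1, hL.2] with ω h1ω h2ω hg0
  simp only [Pi.zero_apply] at h2ω
  by_contra hne
  exact h1ω ⟨lt_of_le_of_ne h2ω (Ne.symm hne), hg0⟩

lemma tim_T [IsFiniteMeasure P] (hgm : AEMeasurable g P) {h : ℕ → Ω → ℝ} {H : Ω → ℝ}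
    (htim : TendstoInMeasure P h atTop H) :
    TendstoInMeasure P (fun n => T g (h n)) atTop (T g H) := by
  set w : Ω → ℝ := fun ω => if g ω = 0 then 0 else (g ω)⁻¹ with hw
  have hwm : AEMeasurable w P := by
    obtain ⟨g0, hg0m, hg0⟩ := hgm
    refine ⟨fun ω => if g0 ω = 0 then 0 else (g0 ω)⁻¹,
      Measurable.ite (hg0m (measurableSet_singleton 0)) measurable_const hg0m.inv, ?_⟩
    filter_upwards [hg0] with ω e
    simp only [hw, e]
  have h2 := tendstoInMeasure_mul_right hwm htim
  have key : ∀ (u : Ω → ℝ) (ω : Ω), dist (T g u ω) (T g H ω) = dist (u ω * w ω) (H ω * w ω) := by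
    intro u ω
    by_cases hgw : g ω = 0 <;>
      simp [T, hw, hgw, div_eq_mul_inv]
  rw [tendstoInMeasure_iff_dist] at h2 ⊢
  intro ε hε
  have hset : (fun n => P {ω | ε ≤ dist (T g (h n) ω) (T g H ω)}) =
      fun n => P {ω | ε ≤ dist (h n ω * w ω) (H ω * w ω)} := by
    funext n
    congr 1
    ext ω
    rw [mem_setOf_eq, mem_setOf_eq, key]
  rw [hset]
  exact h2 ε hε

lemma image_subset_l0plus (hC : C ⊆ L0plus P) (hgC : g ∈ C) :
    T g '' C ⊆ L0plus P := by
  rintro u ⟨f, hf, rfl⟩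
  exact T_mem_l0plus (hC hgC) (hC hf)

lemma K1_mem [IsFiniteMeasure P] (hC : C ⊆ L0plus P) (hgC : g ∈ C)
    (hsp : StrictlyPositiveOn P C g) :
    {h | h ∈ L0plus P ∧ P ({ω | 0 < h ω} ∩ {ω | g ω = 0}) = 0 ∧
      T g h ∈ csSet P (T g '' C) (fun _ => (1:ℝ))} ∈ CSclass P C g := by
  have hE := csSet_mem_CSclass (g := fun _ => (1:ℝ)) (image_subset_l0plus hC hgC)
  refine ⟨fun h hh => hh.1, fun f hf => ⟨hC hf, hsp f hf, subset_csSet (mem_image_of_mem _ hf)⟩,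
    ?_, ?_, ?_⟩
  · intro x hx y hy a b ha hb hab
    refine ⟨l0plus_convex P hx.1 hy.1 ha hb hab, null_combo hx.2.1 hy.2.1 ha hb, ?_⟩
    rw [T_combo g x y hab]
    exact hE.2.2.1 hx.2.2 hy.2.2 ha hb hab
  · intro f F hf hF htim
    refine ⟨l0plus_closed P f F (fun n => (hf n).1) hF htim,
      null_limit (fun n => (hf n).2.1) htim, ?_⟩
    exact hE.2.2.2.1 (fun n => T g (f n)) (T g F) (fun n => (hf n).2.2)
      (aemeasurable_T (hC hgC).1 hF) (tim_T (hC hgC).1 htim)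
  · intro f hf δ hδ hmem
    refine ⟨hmem, null_cs3 hf.2.1 hδ, ?_⟩
    have h1 : T g (fun ω => (1 + δ) * f ω - δ * g ω) ∈ L0plus P :=
      T_mem_l0plus (hC hgC) hmem
    rw [T_cs3 g f δ] at h1 ⊢
    exact hE.2.2.2.2 (T g f) hf.2.2 δ hδ h1

lemma T_mem_csSet [IsFiniteMeasure P] (hC : C ⊆ L0plus P) (hgC : g ∈ C)
    (hsp : StrictlyPositiveOn P C g) {h : Ω → ℝ} (hh : h ∈ csSet P C g) :
    T g h ∈ csSet P (T g '' C) (fun _ => (1:ℝ)) :=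
  (csSet_subset (K1_mem hC hgC hsp) hh).2.2

lemma K2_mem [IsFiniteMeasure P] (hC : C ⊆ L0plus P) (hgC : g ∈ C)
    (hsp : StrictlyPositiveOn P C g) :
    {u | u ∈ L0plus P ∧ ∃ h ∈ csSet P C g, u =ᵐ[P] T g h} ∈
      CSclass P (T g '' C) (fun _ => (1:ℝ)) := by
  have hD := csSet_mem_CSclass (g := g) hC
  set w' : Ω → ℝ := fun ω => if g ω = 0 then 0 else g ω with hw'
  have hw'm : AEMeasurable w' P := by
    obtain ⟨g0, hg0m, hg0⟩ := (hC hgC).1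
    refine ⟨fun ω => if g0 ω = 0 then 0 else g0 ω,
      Measurable.ite (hg0m (measurableSet_singleton 0)) measurable_const hg0m, ?_⟩
    filter_upwards [hg0] with ω e
    simp only [hw', e]
  refine ⟨fun u hu => hu.1, ?_, ?_, ?_, ?_⟩
  · rintro u ⟨f, hf, rfl⟩
    exact ⟨T_mem_l0plus (hC hgC) (hC hf), f, subset_csSet hf, EventuallyEq.rfl⟩
  · rintro x ⟨hxL, h, hhD, hxe⟩ y ⟨hyL, h', hh'D, hye⟩ a b ha hb hab
    refine ⟨l0plus_convex P hxL hyL ha hb hab, a • h + b • h',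
      hD.2.2.1 hhD hh'D ha hb hab, ?_⟩
    rw [T_combo g h h' hab]
    filter_upwards [hxe, hye] with ω e1 e2
    simp only [Pi.add_apply, Pi.smul_apply, smul_eq_mul, e1, e2]
  · intro u U hu hU htim
    refine ⟨l0plus_closed P u U (fun n => (hu n).1) hU htim, ?_⟩
    choose hfun hfunD hfe using fun n => (hu n).2
    have hz : ∀ᵐ ω ∂P, ∀ n, g ω = 0 → hfun n ω = 0 :=
      ae_all_iff.2 fun n => csSet_zero_on hC hsp (hfunD n)
    have hclaim : ∀ n, (fun ω => u n ω * w' ω) =ᵐ[P] hfun n := by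
      intro n
      filter_upwards [hz, hfe n] with ω h1 h2
      by_cases hgw : g ω = 0
      · simp only [hw', hgw, ite_true, mul_zero]
        exact (h1 n hgw).symm
      · simp only [hw', hgw, ite_false]
        rw [h2]
        simp only [T, hgw, ite_false]
        exact div_mul_cancel₀ _ hgw
    have htim2 : TendstoInMeasure P (fun n ω => u n ω * w' ω) atTop (fun ω => U ω * w' ω) :=
      tendstoInMeasure_mul_right hw'm htim
    have htim3 : TendstoInMeasure P hfun atTop (fun ω => U ω * w' ω) :=
      htim2.congr hclaim EventuallyEq.rfl
    have hSU : (fun ω => U ω * w' ω) ∈ csSet P C g :=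
      hD.2.2.2.1 hfun _ hfunD (hU.mul hw'm) htim3
    refine ⟨_, hSU, ?_⟩
    obtain ⟨ns, _, hae⟩ := htim.exists_seq_tendsto_ae
    have hall : ∀ᵐ ω ∂P, ∀ n, u n ω = T g (hfun n) ω := ae_all_iff.2 hfe
    filter_upwards [hae, hall] with ω h1 h2
    by_cases hgw : g ω = 0
    · have hconst : ∀ k, u (ns k) ω = 1 := by
        intro k
        rw [h2 (ns k)]
        simp [T, hgw]
      have hU1 : U ω = 1 :=
        tendsto_nhds_unique ((tendsto_congr hconst).1 h1) tendsto_const_nhds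
      simp [T, hgw, hU1]
    · simp only [T, hgw, ite_false, hw']
      exact (mul_div_cancel_right₀ _ hgw).symm
  · rintro u ⟨huL, h, hhD, hue⟩ δ hδ hmem
    have hgnn := (hC hgC).2
    have hz := csSet_zero_on hC hsp hhD
    have hDh := hD.1 hhD
    have hh'' : (fun ω => (1 + δ) * h ω - δ * g ω) ∈ L0plus P := by
      refine ⟨(hDh.1.const_mul (1 + δ)).sub ((hC hgC).1.const_mul δ), ?_⟩
      filter_upwards [hz, hgnn, hue, hmem.2] with ω h1 h2 h3 h4
      simp only [Pi.zero_apply] at h2 ⊢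
      by_cases hgw : g ω = 0
      · rw [h1 hgw, hgw]
        simp
      · have hgpos : 0 < g ω := lt_of_le_of_ne h2 (Ne.symm hgw)
        have h5 : u ω = h ω / g ω := by rw [h3]; simp [T, hgw]
        have h6 : 0 ≤ (1 + δ) * u ω - δ * 1 := by simpa using h4
        have h7 : (1 + δ) * h ω - δ * g ω = g ω * ((1 + δ) * u ω - δ * 1) := by
          rw [h5]
          field_simp
        rw [h7]
        exact mul_nonneg hgpos.le h6
    refine ⟨hmem, (fun ω => (1 + δ) * h ω - δ * g ω), hD.2.2.2.2 h hhD δ hδ hh'', ?_⟩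
    rw [T_cs3 g h δ]
    filter_upwards [hue] with ω e
    show (1 + δ) * u ω - δ * 1 = (1 + δ) * T g h ω - δ * 1
    rw [e]

end CsAux

/-- with `C̃_g := { 1_{g=0} + 1_{g>0}(f/g) : f ∈ C }`, one has (as sets of
equivalence classes) `cs_1(C̃_g) = { 1_{g=0} + 1_{g>0}(h/g) : h ∈ cs_g(C) }`; in
particular `cs_g(C)` is bounded iff `cs_1(C̃_g)` is bounded. -/
theorem csSet_transform
    (P : Measure Ω) [IsProbabilityMeasure P]
    (C : Set (Ω → ℝ)) (hC : C ⊆ L0plus P) (hconv : Convex ℝ C)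
    (g : Ω → ℝ) (hg : g ∈ C) (hsp : StrictlyPositiveOn P C g) :
    (∀ u : Ω → ℝ,
      u ∈ csSet P ((fun f : Ω → ℝ => fun ω => if g ω = 0 then 1 else f ω / g ω) '' C)
            (fun _ => (1 : ℝ)) ↔
        ∃ h ∈ csSet P C g, u =ᵐ[P] fun ω => if g ω = 0 then 1 else h ω / g ω) ∧
    (BoundedInProb P (csSet P C g) ↔
      BoundedInProb P
        (csSet P ((fun f : Ω → ℝ => fun ω => if g ω = 0 then 1 else f ω / g ω) '' C)
          (fun _ => (1 : ℝ)))) := by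
  have hgm : AEMeasurable g P := (hC hg).1
  have hg0null : P {ω | ¬ (0:ℝ) ≤ g ω} = 0 := by
    have := ae_iff.1 (hC hg).2
    simpa using this
  have hiff : ∀ u : Ω → ℝ,
      u ∈ csSet P (CsAux.T g '' C) (fun _ => (1:ℝ)) ↔
        ∃ h ∈ csSet P C g, u =ᵐ[P] CsAux.T g h := by
    intro u
    constructor
    · intro hu
      obtain ⟨_, h, hhD, hue⟩ := CsAux.csSet_subset (CsAux.K2_mem hC hg hsp) hu
      exact ⟨h, hhD, hue⟩
    · rintro ⟨h, hhD, hue⟩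
      have hT := CsAux.T_mem_csSet hC hg hsp hhD
      have hE := CsAux.csSet_mem_CSclass (g := fun _ => (1:ℝ))
        (CsAux.image_subset_l0plus hC hg)
      exact CsAux.mem_of_ae_eq hE.2.2.2.1 hT
        ((CsAux.aemeasurable_T hgm ((CsAux.csSet_mem_CSclass hC).1 hhD).1).congr hue.symm)
        hue.symm
  refine ⟨hiff, ?_, ?_⟩
  · -- D bounded → E bounded
    intro hDb
    unfold BoundedInProb at hDb ⊢
    rw [ENNReal.tendsto_nhds_zero]
    intro ε hε
    obtain ⟨δ, hδ, hδε⟩ := CsAux.exists_small_bound hgm (ENNReal.half_pos hε.ne')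
    obtain ⟨L, hL⟩ := eventually_atTop.1
      (ENNReal.tendsto_nhds_zero.1 hDb (ε/2) (ENNReal.half_pos hε.ne'))
    rw [eventually_atTop]
    refine ⟨max 1 (L / δ), fun ℓ hℓ => ?_⟩
    have hℓ1 : (1:ℝ) ≤ ℓ := le_trans (le_max_left _ _) hℓ
    have hℓL : L ≤ ℓ * δ := by
      have h1 : L / δ ≤ ℓ := le_trans (le_max_right 1 (L/δ)) hℓ
      calc L = (L/δ) * δ := by field_simp
        _ ≤ ℓ * δ := mul_le_mul_of_nonneg_right h1 hδ.le
    refine iSup₂_le fun u hu => ?_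
    obtain ⟨h, hhD, hue⟩ := (hiff u).1 hu
    have hnull : P ({ω | ¬ u ω = CsAux.T g h ω} ∪ {ω | ¬ (0:ℝ) ≤ g ω}) = 0 :=
      measure_union_null (ae_iff.1 hue) hg0null
    have hsub : {ω | ℓ < u ω} ⊆ ({ω | ℓ * δ < h ω} ∪ {ω | 0 < g ω ∧ g ω < δ}) ∪
        ({ω | ¬ u ω = CsAux.T g h ω} ∪ {ω | ¬ (0:ℝ) ≤ g ω}) := by
      intro ω hω
      simp only [mem_setOf_eq] at hω
      by_cases heq : u ω = CsAux.T g h ω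
      · by_cases hgnn : (0:ℝ) ≤ g ω
        · left
          by_cases hgz : g ω = 0
          · exfalso
            rw [heq] at hω
            simp only [CsAux.T, hgz, ite_true] at hω
            linarith
          · have hgpos : 0 < g ω := lt_of_le_of_ne hgnn (Ne.symm hgz)
            by_cases hgδ : g ω < δ
            · exact Or.inr ⟨hgpos, hgδ⟩
            · push_neg at hgδ
              left
              simp only [mem_setOf_eq]
              have hT : u ω = h ω / g ω := by rw [heq]; simp [CsAux.T, hgz]
              have hhω : h ω = u ω * g ω := by rw [hT, div_mul_cancel₀ _ hgz]
              have hupos : 0 < u ω := lt_trans zero_lt_one (lt_of_le_of_lt hℓ1 hω)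
              rw [hhω]
              calc ℓ * δ < u ω * δ := mul_lt_mul_of_pos_right hω hδ
                _ ≤ u ω * g ω := mul_le_mul_of_nonneg_left hgδ hupos.le
        · exact Or.inr (Or.inr hgnn)
      · exact Or.inr (Or.inl heq)
    calc P {ω | ℓ < u ω}
        ≤ P (({ω | ℓ * δ < h ω} ∪ {ω | 0 < g ω ∧ g ω < δ}) ∪
          ({ω | ¬ u ω = CsAux.T g h ω} ∪ {ω | ¬ (0:ℝ) ≤ g ω})) := measure_mono hsub
      _ ≤ P ({ω | ℓ * δ < h ω} ∪ {ω | 0 < g ω ∧ g ω < δ}) +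
          P ({ω | ¬ u ω = CsAux.T g h ω} ∪ {ω | ¬ (0:ℝ) ≤ g ω}) := measure_union_le _ _
      _ = P ({ω | ℓ * δ < h ω} ∪ {ω | 0 < g ω ∧ g ω < δ}) := by rw [hnull, add_zero]
      _ ≤ P {ω | ℓ * δ < h ω} + P {ω | 0 < g ω ∧ g ω < δ} := measure_union_le _ _
      _ ≤ ε/2 + ε/2 := add_le_add
          (le_trans (le_iSup₂ (f := fun f (_ : f ∈ csSet P C g) => P {ω | ℓ * δ < f ω}) h hhD)
            (hL (ℓ*δ) hℓL)) hδε
      _ = ε := ENNReal.add_halves ε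
  · -- E bounded → D bounded
    intro hEb
    unfold BoundedInProb at hEb ⊢
    rw [ENNReal.tendsto_nhds_zero]
    intro ε hε
    obtain ⟨M, hM, hMε⟩ := CsAux.exists_gt_bound hgm (ENNReal.half_pos hε.ne')
    obtain ⟨L, hL⟩ := eventually_atTop.1
      (ENNReal.tendsto_nhds_zero.1 hEb (ε/2) (ENNReal.half_pos hε.ne'))
    rw [eventually_atTop]
    refine ⟨max 1 (L * M), fun ℓ hℓ => ?_⟩
    have hℓ1 : (1:ℝ) ≤ ℓ := le_trans (le_max_left _ _) hℓ
    have hℓL : L ≤ ℓ / M := by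
      rw [le_div_iff₀ hM]
      exact le_trans (le_max_right 1 (L*M)) hℓ
    refine iSup₂_le fun h hhD => ?_
    have hTmem : CsAux.T g h ∈ csSet P (CsAux.T g '' C) (fun _ => (1:ℝ)) :=
      CsAux.T_mem_csSet hC hg hsp hhD
    have hz := CsAux.csSet_zero_on hC hsp hhD
    have hnull : P ({ω | ¬ (g ω = 0 → h ω = 0)} ∪ {ω | ¬ (0:ℝ) ≤ g ω}) = 0 :=
      measure_union_null (ae_iff.1 hz) hg0null
    have hsub : {ω | ℓ < h ω} ⊆ ({ω | ℓ/M < CsAux.T g h ω} ∪ {ω | M < |g ω|}) ∪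
        ({ω | ¬ (g ω = 0 → h ω = 0)} ∪ {ω | ¬ (0:ℝ) ≤ g ω}) := by
      intro ω hω
      simp only [mem_setOf_eq] at hω
      by_cases himp : g ω = 0 → h ω = 0
      · by_cases hgnn : (0:ℝ) ≤ g ω
        · left
          by_cases hgM : M < |g ω|
          · exact Or.inr hgM
          · push_neg at hgM
            left
            simp only [mem_setOf_eq]
            have hgz : g ω ≠ 0 := by
              intro h0
              rw [himp h0] at hω
              linarith
            have hgpos : 0 < g ω := lt_of_le_of_ne hgnn (Ne.symm hgz)
            have hgM' : g ω ≤ M := le_trans (le_abs_self _) hgM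
            have hhpos : 0 < h ω := lt_trans (lt_of_lt_of_le zero_lt_one hℓ1) hω
            simp only [CsAux.T, hgz, ite_false]
            calc ℓ/M < h ω/M := by gcongr
              _ ≤ h ω / g ω := by gcongr
        · exact Or.inr (Or.inr hgnn)
      · exact Or.inr (Or.inl himp)
    calc P {ω | ℓ < h ω}
        ≤ P (({ω | ℓ/M < CsAux.T g h ω} ∪ {ω | M < |g ω|}) ∪
          ({ω | ¬ (g ω = 0 → h ω = 0)} ∪ {ω | ¬ (0:ℝ) ≤ g ω})) := measure_mono hsub
      _ ≤ P ({ω | ℓ/M < CsAux.T g h ω} ∪ {ω | M < |g ω|}) +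
          P ({ω | ¬ (g ω = 0 → h ω = 0)} ∪ {ω | ¬ (0:ℝ) ≤ g ω}) := measure_union_le _ _
      _ = P ({ω | ℓ/M < CsAux.T g h ω} ∪ {ω | M < |g ω|}) := by rw [hnull, add_zero]
      _ ≤ P {ω | ℓ/M < CsAux.T g h ω} + P {ω | M < |g ω|} := measure_union_le _ _
      _ ≤ ε/2 + ε/2 := add_le_add
          (le_trans (le_iSup₂ (f := fun f (_ : f ∈ csSet P
              ((fun f : Ω → ℝ => fun ω => if g ω = 0 then 1 else f ω / g ω) '' C)
              fun _ => (1:ℝ)) => P {ω | ℓ/M < f ω}) (CsAux.T g h) hTmem)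
            (hL (ℓ/M) hℓL)) hMε
      _ = ε := ENNReal.add_halves ε


end
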